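/- Let ε, η, Z be random variables with Z independent of the pair (ε, η), and let X = h(Z, η) for a measurable function h. Then ε is conditionally independent of X given η. -/

import Mathlib

open MeasureTheory ProbabilityTheory Set Filter Topology

/-- Control-function exogeneity: if `Z ⟂ (ε, η)` and `X = h(Z, η)`, then `ε ⟂ X ∣ η`. -/
theorem cf_conditional_independence
    {Ω : Type*} [MeasurableSpace Ω] [StandardBorelSpace Ω] [Nonempty Ω]
    (P : Measure Ω) [IsProbabilityMeasure P]
    (ε η Z : Ω → ℝ) (hε : Measurable ε) (hη : Measurable η) (hZ : Measurable Z)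
    (h : ℝ → ℝ → ℝ) (hmeas : Measurable (Function.uncurry h))
    (hindep : IndepFun Z (fun ω => (ε ω, η ω)) P)
    (X : Ω → ℝ) (hX : X = fun ω => h (Z ω) (η ω)) :
    CondIndepFun (MeasurableSpace.comap η inferInstance) hη.comap_le ε X P := by
  have hm'le : MeasurableSpace.comap η inferInstance ≤ _ := hη.comap_le
  have hV : Measurable (fun ω => (Z ω, η ω)) := hZ.prodMk hη
  -- The key conditional-expectation computation.
  have key : ∀ (s u : Set ℝ), MeasurableSet s → MeasurableSet u →
      (P⟦ε ⁻¹' s ∩ Z ⁻¹' u | MeasurableSpace.comap η inferInstance⟧) =ᵐ[P]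
        fun ω => (P (Z ⁻¹' u)).toReal *
          (P⟦ε ⁻¹' s | MeasurableSpace.comap η inferInstance⟧) ω := by
    intro s u hs hu
    have hA : MeasurableSet (ε ⁻¹' s) := hε hs
    have hB : MeasurableSet (Z ⁻¹' u) := hZ hu
    set c : ℝ := (P (Z ⁻¹' u)).toReal with hc
    have hfint : Integrable ((ε ⁻¹' s ∩ Z ⁻¹' u).indicator (fun _ => (1 : ℝ))) P :=
      (integrable_const (1 : ℝ)).indicator (hA.inter hB)
    have hAint : Integrable ((ε ⁻¹' s).indicator (fun _ => (1 : ℝ))) P :=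
      (integrable_const (1 : ℝ)).indicator hA
    refine (ae_eq_condExp_of_forall_setIntegral_eq hm'le hfint
      (fun t _ _ => (integrable_condExp.const_mul c).integrableOn)
      (fun t hmt _ => ?_) ?_).symm
    · obtain ⟨v, hv, rfl⟩ := hmt
      have hηv : MeasurableSet (η ⁻¹' v) := hη hv
      have h1 : ∫ x in η ⁻¹' v,
            c * (P⟦ε ⁻¹' s | MeasurableSpace.comap η inferInstance⟧) x ∂P
          = c * (P ((ε ⁻¹' s) ∩ η ⁻¹' v)).toReal := by
        rw [MeasureTheory.integral_const_mul]
        rw [setIntegral_condExp hm'le hAint ⟨v, hv, rfl⟩]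
        rw [setIntegral_indicator hA]
        simp [setIntegral_const, Set.inter_comm, Measure.real]
      have h2 : ∫ x in η ⁻¹' v, (ε ⁻¹' s ∩ Z ⁻¹' u).indicator (fun _ => (1:ℝ)) x ∂P
          = (P ((ε ⁻¹' s ∩ Z ⁻¹' u) ∩ η ⁻¹' v)).toReal := by
        rw [setIntegral_indicator (hA.inter hB)]
        simp [setIntegral_const, Set.inter_comm, Measure.real]
      rw [h1, h2]
      have hset : (ε ⁻¹' s ∩ Z ⁻¹' u) ∩ η ⁻¹' v
          = Z ⁻¹' u ∩ (fun ω => (ε ω, η ω)) ⁻¹' (s ×ˢ v) := by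
        ext x
        simp only [Set.mem_inter_iff, Set.mem_preimage, Set.mem_prod]
        tauto
      rw [hset, hindep.measure_inter_preimage_eq_mul u (s ×ˢ v) hu (hs.prod hv),
        ENNReal.toReal_mul]
      have : (fun ω => (ε ω, η ω)) ⁻¹' (s ×ˢ v) = ε ⁻¹' s ∩ η ⁻¹' v := rfl
      rw [this, mul_comm]
    · exact StronglyMeasurable.aestronglyMeasurable
        (stronglyMeasurable_condExp.const_mul c)
  -- conditional probability of `Z ∈ u` given η is constant.
  have key0 : ∀ (u : Set ℝ), MeasurableSet u →
      (P⟦Z ⁻¹' u | MeasurableSpace.comap η inferInstance⟧) =ᵐ[P]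
        fun _ => (P (Z ⁻¹' u)).toReal := by
    intro u hu
    have h1 := key univ u MeasurableSet.univ hu
    simp only [Set.preimage_univ, Set.univ_inter] at h1
    have h2 : (P⟦(univ : Set Ω) | MeasurableSpace.comap η inferInstance⟧)
        =ᵐ[P] fun _ => (1 : ℝ) := by
      have hud : (univ : Set Ω).indicator (fun _ => (1:ℝ)) = fun _ => (1:ℝ) := by simp
      rw [hud, condExp_const hm'le (1 : ℝ)]
    filter_upwards [h1, h2] with ω hω1 hω2
    rw [hω1, hω2, mul_one]
  -- ε is conditionally independent of the pair (Z, η) given η.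
  have hpair : CondIndepFun (MeasurableSpace.comap η inferInstance) hη.comap_le
      ε (fun ω => (Z ω, η ω)) P := by
    rw [condIndepFun_iff_condIndep]
    have hpm1 : MeasurableSpace.comap ε inferInstance
        = MeasurableSpace.generateFrom (Set.preimage ε '' {s : Set ℝ | MeasurableSet s}) := by
      conv_lhs => rw [← MeasurableSpace.generateFrom_measurableSet (α := ℝ)]
      rw [MeasurableSpace.comap_generateFrom]
    have hpm2 : MeasurableSpace.comap (fun ω => (Z ω, η ω)) inferInstance
        = MeasurableSpace.generateFrom (Set.preimage (fun ω => (Z ω, η ω)) ''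
            (image2 (· ×ˢ ·) { s : Set ℝ | MeasurableSet s } { t : Set ℝ | MeasurableSet t })) := by
      conv_lhs => rw [show (inferInstance : MeasurableSpace (ℝ × ℝ)) = Prod.instMeasurableSpace
        from rfl, ← generateFrom_prod]
      rw [MeasurableSpace.comap_generateFrom]
    refine CondIndepSets.condIndep hε.comap_le hV.comap_le ?_ ?_ hpm1 hpm2 ?_
    · rintro _ ⟨s, hs, rfl⟩ _ ⟨s', hs', rfl⟩ _
      have hs : MeasurableSet s := hs
      have hs' : MeasurableSet s' := hs'
      exact ⟨s ∩ s', hs.inter hs', by rw [Set.preimage_inter]⟩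
    · rintro _ ⟨_, ⟨a, ha, b, hb, rfl⟩, rfl⟩ _ ⟨_, ⟨a', ha', b', hb', rfl⟩, rfl⟩ _
      have ha : MeasurableSet a := ha
      have hb : MeasurableSet b := hb
      have ha' : MeasurableSet a' := ha'
      have hb' : MeasurableSet b' := hb'
      refine ⟨(a ∩ a') ×ˢ (b ∩ b'),
        ⟨a ∩ a', ha.inter ha', b ∩ b', hb.inter hb', rfl⟩, ?_⟩
      ext x
      simp only [Set.mem_preimage, Set.mem_inter_iff, Set.mem_prod]
      tauto
    · rw [condIndepSets_iff]
      rotate_left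
      · rintro _ ⟨s, hs, rfl⟩; exact hε hs
      · rintro _ ⟨_, ⟨a, ha, b, hb, rfl⟩, rfl⟩
        have ha : MeasurableSet a := ha
        have hb : MeasurableSet b := hb
        exact hV (ha.prod hb)
      rintro _ _ ⟨s, hs, rfl⟩ ⟨_, ⟨a, ha, b, hb, rfl⟩, rfl⟩
      have hs : MeasurableSet s := hs
      have ha : MeasurableSet a := ha
      have hb : MeasurableSet b := hb
      have hVpre : (fun ω => (Z ω, η ω)) ⁻¹' ((fun x1 x2 => x1 ×ˢ x2) a b)
          = Z ⁻¹' a ∩ η ⁻¹' b := rfl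
      rw [hVpre]
      have hA : MeasurableSet (ε ⁻¹' s) := hε hs
      have hB : MeasurableSet (Z ⁻¹' a) := hZ ha
      have hC' : MeasurableSet[MeasurableSpace.comap η inferInstance] (η ⁻¹' b) := ⟨b, hb, rfl⟩
      have hL : (P⟦ε ⁻¹' s ∩ (Z ⁻¹' a ∩ η ⁻¹' b) | MeasurableSpace.comap η inferInstance⟧)
          =ᵐ[P] (η ⁻¹' b).indicator
            (P⟦ε ⁻¹' s ∩ Z ⁻¹' a | MeasurableSpace.comap η inferInstance⟧) := by
        have hrw : ε ⁻¹' s ∩ (Z ⁻¹' a ∩ η ⁻¹' b) = η ⁻¹' b ∩ (ε ⁻¹' s ∩ Z ⁻¹' a) := by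
          ext x; simp only [Set.mem_inter_iff]; tauto
        rw [hrw, ← Set.indicator_indicator]
        exact condExp_indicator ((integrable_const (1:ℝ)).indicator (hA.inter hB)) hC'
      have hR : (P⟦Z ⁻¹' a ∩ η ⁻¹' b | MeasurableSpace.comap η inferInstance⟧)
          =ᵐ[P] (η ⁻¹' b).indicator
            (P⟦Z ⁻¹' a | MeasurableSpace.comap η inferInstance⟧) := by
        have hrw : Z ⁻¹' a ∩ η ⁻¹' b = η ⁻¹' b ∩ Z ⁻¹' a := Set.inter_comm _ _
        rw [hrw, ← Set.indicator_indicator]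
        exact condExp_indicator ((integrable_const (1:ℝ)).indicator hB) hC'
      filter_upwards [hL, hR, key s a hs ha, key0 a ha] with ω hωL hωR hωk hωk0
      rw [Pi.mul_apply, hωL, hωR]
      by_cases hωb : ω ∈ η ⁻¹' b
      · rw [Set.indicator_of_mem hωb, Set.indicator_of_mem hωb, hωk, hωk0]
        ring
      · rw [Set.indicator_of_notMem hωb, Set.indicator_of_notMem hωb, mul_zero]
  have hcomp := hpair.comp measurable_id hmeas
  have hXeq : X = Function.uncurry h ∘ (fun ω => (Z ω, η ω)) := by
    funext ω; simp [hX, Function.uncurry]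
  rw [hXeq]
  exact hcomp
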